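/- Let K ≥ 2 be an integer and let β > 1. Then min{ ‖v‖_β : v ∈ T^K } = 2^{−1}·( ⌊K/2⌋^{1−β} + ⌈K/2⌉^{1−β} )^{1/β}, where ‖v‖_β = (Σ_{k=1}^K |v_k|^β)^{1/β} and T^K = {v ∈ ℝ^K : ‖v‖₁ = 1 and Σ_{k=1}^K v_k = 0}. Moreover, the minimum is attained at the vector v with v_k = 1/(2⌊K/2⌋) for 1 ≤ k ≤ ⌊K/2⌋ and v_k = −1/(2⌈K/2⌉) for ⌊K/2⌋ < k ≤ K. -/

import Mathlib

open Finset Real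

/-- The α-Tsallis entropy on the positive orthant (Shannon for α = 1, Burg for α = 0). -/
noncomputable def tsallis (α : ℝ) {K : ℕ} (p : Fin K → ℝ) : ℝ :=
  if α = 0 then ∑ k, Real.log (p k)
  else if α = 1 then -∑ k, p k * Real.log (p k)
  else (∑ k, p k ^ α) / (α * (1 - α))

/-- The gradient of the α-Tsallis entropy on the positive orthant. -/
noncomputable def tsallisGrad (α : ℝ) {K : ℕ} (q : Fin K → ℝ) (k : Fin K) : ℝ :=
  if α = 0 then 1 / q k
  else if α = 1 then -(1 + Real.log (q k))
  else -(q k ^ (α - 1)) / (α - 1)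

/-- The Bregman divergence D_α of the negative α-Tsallis entropy:
`D_α(p‖q) = -S_α(p) + S_α(q) + ⟨∇S_α(q), p - q⟩`. -/
noncomputable def breg (α : ℝ) {K : ℕ} (p q : Fin K → ℝ) : ℝ :=
  -tsallis α p + tsallis α q + ∑ k, tsallisGrad α q k * (p k - q k)

/-- The relative interior of the probability simplex Δ^K. -/
def relintSimplex (K : ℕ) : Set (Fin K → ℝ) :=
  {p | (∀ k, 0 < p k ∧ p k < 1) ∧ ∑ k, p k = 1}

/-- The ℓ¹ norm on ℝ^K. -/
noncomputable def l1 {K : ℕ} (x : Fin K → ℝ) : ℝ := ∑ k, |x k|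

/-- Unit ℓ¹-sphere of the tangent space of the simplex. -/
def tangentSphere (K : ℕ) : Set (Fin K → ℝ) :=
  {v | (∑ k, |v k|) = 1 ∧ (∑ k, v k) = 0}

/-- The balanced minimizer: mass +1/2 spread over the first ⌊K/2⌋ coordinates,
mass -1/2 spread over the remaining ⌈K/2⌉ coordinates. -/
noncomputable def vBalanced (K : ℕ) : Fin K → ℝ :=
  fun k => if k.val < K / 2 then 1 / (2 * ((K / 2 : ℕ) : ℝ))
           else -(1 / (2 * (((K + 1) / 2 : ℕ) : ℝ)))

lemma convexOn_rpow_neg {c : ℝ} (hc : c ≤ 0) :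
    ConvexOn ℝ (Set.Ioi (0:ℝ)) fun x : ℝ => x ^ c := by
  refine ⟨convex_Ioi 0, fun x hx y hy a b ha hb hab => ?_⟩
  simp only [Set.mem_Ioi] at hx hy
  simp only [smul_eq_mul]
  have hs : 0 < a * x + b * y := by
    rcases eq_or_lt_of_le ha with h | h
    · have hb1 : b = 1 := by linarith
      rw [← h, hb1]; nlinarith
    · nlinarith
  have hlog : c * Real.log (a * x + b * y) ≤ a * (c * Real.log x) + b * (c * Real.log y) := by
    have h1 : a * Real.log x + b * Real.log y ≤ Real.log (a * x + b * y) := by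
      have := strictConcaveOn_log_Ioi.concaveOn.2 (Set.mem_Ioi.2 hx) (Set.mem_Ioi.2 hy) ha hb hab
      simpa [smul_eq_mul] using this
    nlinarith
  calc (a * x + b * y) ^ c = Real.exp (c * Real.log (a*x+b*y)) := by
        rw [Real.rpow_def_of_pos hs, mul_comm]
    _ ≤ Real.exp (a * (c * Real.log x) + b * (c * Real.log y)) := Real.exp_le_exp.2 hlog
    _ ≤ a * Real.exp (c * Real.log x) + b * Real.exp (c * Real.log y) := by
        have := convexOn_exp.2 (Set.mem_univ (c * Real.log x)) (Set.mem_univ (c * Real.log y)) ha hb hab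
        simpa using this
    _ = a * x ^ c + b * y ^ c := by
        rw [Real.rpow_def_of_pos hx, Real.rpow_def_of_pos hy, mul_comm (Real.log x), mul_comm (Real.log y)]

lemma key_int {c : ℝ} (hc : c ≤ 0) {p n a b : ℕ} (hp : 1 ≤ p) (hn : 1 ≤ n)
    (hab : a ≤ b) (hba : b ≤ a + 1) (hsum : p + n = a + b) :
    (a:ℝ) ^ c + (b:ℝ) ^ c ≤ (p:ℝ) ^ c + (n:ℝ) ^ c := by
  suffices H : ∀ p n : ℕ, 1 ≤ p → 1 ≤ n → p ≤ n → p + n = a + b →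
      (a:ℝ) ^ c + (b:ℝ) ^ c ≤ (p:ℝ) ^ c + (n:ℝ) ^ c by
    rcases le_total p n with h | h
    · exact H p n hp hn h hsum
    · have := H n p hn hp h (by omega); linarith
  intro p n hp hn hpn hsum
  have hpa : p ≤ a := by omega
  have hbn : b ≤ n := by omega
  rcases eq_or_lt_of_le hpa with h | h
  · have : n = b := by omega
    rw [h, this]
  · have hbn' : b < n := by omega
    set f : ℝ → ℝ := fun x : ℝ => x ^ c with hf
    have F := convexOn_rpow_neg hc
    have memp : (p:ℝ) ∈ Set.Ioi (0:ℝ) := by simp; exact_mod_cast hp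
    have mema : (a:ℝ) ∈ Set.Ioi (0:ℝ) := by simp; omega
    have memb : (b:ℝ) ∈ Set.Ioi (0:ℝ) := by simp; omega
    have memn : (n:ℝ) ∈ Set.Ioi (0:ℝ) := by simp; omega
    have hpaR : (p:ℝ) < a := by exact_mod_cast h
    have hbnR : (b:ℝ) < n := by exact_mod_cast hbn'
    have slope : (f a - f p) / ((a:ℝ) - p) ≤ (f n - f b) / ((n:ℝ) - b) := by
      rcases eq_or_lt_of_le hab with hab' | hab'
      · have := F.slope_mono_adjacent memp memn hpaR (by exact_mod_cast (by omega : a < n))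
        rw [← hab'] at *
        exact this
      · have habR : (a:ℝ) < b := by exact_mod_cast hab'
        have s1 := F.slope_mono_adjacent memp memb hpaR habR
        have s2 := F.slope_mono_adjacent mema memn habR hbnR
        exact s1.trans s2
    have ht : (a:ℝ) - p = (n:ℝ) - b := by
      have : (p:ℝ) + n = (a:ℝ) + b := by exact_mod_cast hsum
      linarith
    have htpos : (0:ℝ) < (a:ℝ) - p := by linarith
    rw [← ht] at slope
    have := (div_le_div_iff_of_pos_right htpos).mp slope
    simp only [hf] at this
    linarith

lemma sum_rpow_ge {K : ℕ} (s : Finset (Fin K)) (x : Fin K → ℝ) (hx : ∀ k ∈ s, 0 ≤ x k)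
    {β : ℝ} (hβ : 1 ≤ β) (hs : s.Nonempty) :
    ((s.card : ℝ)) ^ (1 - β) * (∑ k ∈ s, x k) ^ β ≤ ∑ k ∈ s, x k ^ β := by
  set m : ℝ := (s.card : ℝ) with hm
  have hm0 : 0 < m := by
    rw [hm]; exact_mod_cast Finset.card_pos.mpr hs
  have h := Real.rpow_arith_mean_le_arith_mean_rpow s (fun _ => m⁻¹) x
    (fun i _ => by positivity)
    (by simp [Finset.sum_const]; field_simp; exact hm.symm) hx hβ
  rw [← Finset.mul_sum, ← Finset.mul_sum] at h
  have hS : 0 ≤ ∑ k ∈ s, x k := Finset.sum_nonneg hx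
  rw [Real.mul_rpow (by positivity) hS, Real.inv_rpow hm0.le] at h
  have h2 : m * ((m ^ β)⁻¹ * (∑ k ∈ s, x k) ^ β) ≤ m * (m⁻¹ * ∑ k ∈ s, x k ^ β) :=
    mul_le_mul_of_nonneg_left h hm0.le
  have hmβ : m ^ β ≠ 0 := by positivity
  have key : m * (m ^ β)⁻¹ = m ^ (1 - β) := by
    rw [show (1:ℝ) - β = 1 + (-β) by ring, Real.rpow_add hm0, Real.rpow_one,
      Real.rpow_neg hm0.le]
  calc m ^ (1-β) * (∑ k ∈ s, x k) ^ β = m * ((m ^ β)⁻¹ * (∑ k ∈ s, x k) ^ β) := by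
        rw [← mul_assoc, key]
    _ ≤ m * (m⁻¹ * ∑ k ∈ s, x k ^ β) := h2
    _ = ∑ k ∈ s, x k ^ β := by field_simp

lemma sum_ite_fin {K a : ℕ} (ha : a ≤ K) (c1 c2 : ℝ) :
    ∑ k : Fin K, (if k.val < a then c1 else c2) = a * c1 + ((K - a : ℕ) : ℝ) * c2 := by
  rw [Fin.sum_univ_eq_sum_range (fun i => if i < a then c1 else c2)]
  rw [Finset.range_eq_Ico, ← Finset.sum_Ico_consecutive _ (Nat.zero_le a) ha]
  rw [Finset.sum_congr rfl (fun i hi => if_pos (Finset.mem_Ico.mp hi).2),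
      Finset.sum_congr rfl (g := fun _ => c2) (fun i hi => if_neg (by have := (Finset.mem_Ico.mp hi).1; omega))]
  simp [Nat.card_Ico]

lemma aux_pow {m β : ℝ} (hm : 0 < m) : m * (m ^ β)⁻¹ = m ^ (1 - β) := by
  rw [show (1:ℝ) - β = 1 + (-β) by ring, Real.rpow_add hm, Real.rpow_one,
    Real.rpow_neg hm.le]

lemma factor_half {β : ℝ} (hβ : 1 < β) {S : ℝ} (hS : 0 ≤ S) :
    (((2:ℝ)⁻¹) ^ β * S) ^ (1/β) = 2⁻¹ * S ^ (1/β) := by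
  have hβ0 : β ≠ 0 := by linarith
  rw [Real.mul_rpow (by positivity) hS, ← Real.rpow_mul (by norm_num : (0:ℝ) ≤ 2⁻¹),
    mul_one_div, div_self hβ0, Real.rpow_one]

theorem min_beta_norm_tangent_sphere_beta_gt_one (K : ℕ) (hK : 2 ≤ K)
    (β : ℝ) (hβ : 1 < β) :
    IsLeast {r : ℝ | ∃ v ∈ tangentSphere K, r = (∑ k, |v k| ^ β) ^ (1 / β)}
      (2⁻¹ * (((K / 2 : ℕ) : ℝ) ^ (1 - β) + (((K + 1) / 2 : ℕ) : ℝ) ^ (1 - β)) ^ (1 / β)) ∧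
    vBalanced K ∈ tangentSphere K ∧
    (∑ k, |vBalanced K k| ^ β) ^ (1 / β) =
      2⁻¹ * (((K / 2 : ℕ) : ℝ) ^ (1 - β) + (((K + 1) / 2 : ℕ) : ℝ) ^ (1 - β)) ^ (1 / β) := by
  classical
  set a : ℕ := K / 2 with hadef
  set b : ℕ := (K + 1) / 2 with hbdef
  have ha1 : 1 ≤ a := by omega
  have hb1 : 1 ≤ b := by omega
  have habK : a + b = K := by omega
  have haK : a ≤ K := by omega
  have hKa : K - a = b := by omega
  have haR : (0:ℝ) < (a:ℝ) := by exact_mod_cast ha1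
  have hbR : (0:ℝ) < (b:ℝ) := by exact_mod_cast hb1
  set S : ℝ := ((a:ℕ):ℝ) ^ (1 - β) + ((b:ℕ):ℝ) ^ (1 - β) with hSdef
  have hS0 : 0 ≤ S := by positivity
  -- membership of vBalanced in tangentSphere
  have habs : ∀ k : Fin K, |vBalanced K k| = if k.val < a then 1 / (2 * (a:ℝ)) else 1 / (2 * (b:ℝ)) := by
    intro k
    unfold vBalanced
    split
    · rw [abs_of_nonneg (by positivity)]
    · rw [abs_neg, abs_of_nonneg (by positivity)]
  have hmem : vBalanced K ∈ tangentSphere K := by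
    constructor
    · rw [Finset.sum_congr rfl (fun k _ => habs k), sum_ite_fin haK, hKa]
      field_simp
      ring
    · show (∑ k : Fin K, vBalanced K k) = 0
      unfold vBalanced
      rw [sum_ite_fin haK, hKa]
      field_simp
      rw [← hadef, ← hbdef]
      rw [div_self haR.ne', div_self hbR.ne']; ring
  -- value at vBalanced
  have hval : ∑ k : Fin K, |vBalanced K k| ^ β = ((2:ℝ)⁻¹) ^ β * S := by
    have : ∀ k : Fin K, |vBalanced K k| ^ β
        = if k.val < a then (1 / (2 * (a:ℝ))) ^ β else (1 / (2 * (b:ℝ))) ^ β := by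
      intro k; rw [habs k]; split <;> rfl
    rw [Finset.sum_congr rfl (fun k _ => this k), sum_ite_fin haK, hKa]
    have t : ∀ m : ℝ, 0 < m → m * (1 / (2 * m)) ^ β = (2:ℝ)⁻¹ ^ β * m ^ (1 - β) := by
      intro m hm
      have : (1 : ℝ) / (2 * m) = 2⁻¹ * m⁻¹ := by field_simp
      rw [this, Real.mul_rpow (by norm_num) (by positivity), Real.inv_rpow hm.le]
      rw [show m * ((2:ℝ)⁻¹ ^ β * (m ^ β)⁻¹) = (2:ℝ)⁻¹ ^ β * (m * (m ^ β)⁻¹) by ring,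
        aux_pow hm]
    rw [t _ haR, t _ hbR, hSdef]; ring
  have hvalpow : (∑ k : Fin K, |vBalanced K k| ^ β) ^ (1/β) = 2⁻¹ * S ^ (1/β) := by
    rw [hval, factor_half hβ hS0]
  refine ⟨⟨⟨vBalanced K, hmem, hvalpow.symm⟩, ?_⟩, hmem, hvalpow⟩
  -- lower bound
  rintro r ⟨v, ⟨hv1, hv0⟩, rfl⟩
  set P : Finset (Fin K) := Finset.univ.filter (fun k => 0 ≤ v k) with hPdef
  set N : Finset (Fin K) := Finset.univ.filter (fun k => ¬ 0 ≤ v k) with hNdef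
  have hmemP : ∀ k ∈ P, 0 ≤ v k := fun k hk => (Finset.mem_filter.mp hk).2
  have hmemN : ∀ k ∈ N, 0 ≤ -v k := fun k hk => by
    have := (Finset.mem_filter.mp hk).2; linarith [lt_of_not_ge this]
  have hsplit_abs : (∑ k ∈ P, v k) + (∑ k ∈ N, -v k) = 1 := by
    rw [← hv1, ← Finset.sum_filter_add_sum_filter_not Finset.univ (fun k => 0 ≤ v k) (fun k => |v k|)]
    congr 1
    · exact Finset.sum_congr rfl (fun k hk => (abs_of_nonneg (hmemP k hk)).symm)
    · exact Finset.sum_congr rfl (fun k hk => by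
        rw [abs_of_neg (lt_of_not_ge (Finset.mem_filter.mp hk).2)])
  have hsplit_sum : (∑ k ∈ P, v k) + (∑ k ∈ N, v k) = 0 := by
    rw [← hv0, Finset.sum_filter_add_sum_filter_not Finset.univ (fun k => 0 ≤ v k) v]
  have hNneg : ∑ k ∈ N, -v k = - ∑ k ∈ N, v k := by rw [Finset.sum_neg_distrib]
  have hSp : ∑ k ∈ P, v k = 1/2 := by rw [hNneg] at hsplit_abs; linarith
  have hSn : ∑ k ∈ N, -v k = 1/2 := by linarith
  have hPne : P.Nonempty := by
    rcases P.eq_empty_or_nonempty with h | h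
    · rw [h, Finset.sum_empty] at hSp; norm_num at hSp
    · exact h
  have hNne : N.Nonempty := by
    rcases N.eq_empty_or_nonempty with h | h
    · rw [h, Finset.sum_empty] at hSn; norm_num at hSn
    · exact h
  have hcard : P.card + N.card = K := by
    rw [hPdef, hNdef, Finset.card_filter_add_card_filter_not, Finset.card_univ,
      Fintype.card_fin]
  have hJP := sum_rpow_ge P v hmemP hβ.le hPne
  have hJN := sum_rpow_ge N (fun k => -v k) hmemN hβ.le hNne
  rw [hSp] at hJP
  rw [hSn] at hJN
  have hsplit_pow : ∑ k : Fin K, |v k| ^ β = (∑ k ∈ P, v k ^ β) + (∑ k ∈ N, (-v k) ^ β) := by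
    rw [← Finset.sum_filter_add_sum_filter_not Finset.univ (fun k => 0 ≤ v k) (fun k => |v k| ^ β)]
    congr 1
    · exact Finset.sum_congr rfl (fun k hk => by rw [abs_of_nonneg (hmemP k hk)])
    · exact Finset.sum_congr rfl (fun k hk => by
        rw [abs_of_neg (lt_of_not_ge (Finset.mem_filter.mp hk).2)])
  have hki := key_int (by linarith : (1:ℝ) - β ≤ 0) (Finset.card_pos.mpr hPne)
    (Finset.card_pos.mpr hNne) (by omega : a ≤ b) (by omega : b ≤ a + 1)
    (by omega : P.card + N.card = a + b)
  have hhalf : ((1:ℝ)/2) ^ β = ((2:ℝ)⁻¹) ^ β := by norm_num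
  have hT : ((2:ℝ)⁻¹) ^ β * S ≤ ∑ k : Fin K, |v k| ^ β := by
    rw [hsplit_pow]
    have h2β : (0:ℝ) ≤ ((2:ℝ)⁻¹) ^ β := by positivity
    calc ((2:ℝ)⁻¹) ^ β * S ≤ ((2:ℝ)⁻¹) ^ β * (((P.card:ℝ)) ^ (1-β) + ((N.card:ℝ)) ^ (1-β)) := by
          apply mul_le_mul_of_nonneg_left _ h2β
          exact hki
      _ = (P.card:ℝ) ^ (1-β) * ((1:ℝ)/2) ^ β + (N.card:ℝ) ^ (1-β) * ((1:ℝ)/2) ^ β := by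
          rw [hhalf]; ring
      _ ≤ (∑ k ∈ P, v k ^ β) + (∑ k ∈ N, (-v k) ^ β) := add_le_add hJP hJN
  calc 2⁻¹ * S ^ (1/β) = (((2:ℝ)⁻¹) ^ β * S) ^ (1/β) := (factor_half hβ hS0).symm
    _ ≤ (∑ k : Fin K, |v k| ^ β) ^ (1/β) :=
        Real.rpow_le_rpow (by positivity) hT (by positivity)
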